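/- Let n ≥ 2 and let t_1, ..., t_n be pairwise distinct reals. Let (E_0, E_1, ..., E_n) be a strictly admissible (n+1)-tuple of measurable subsets of ℝ relative to the maps L_0(x,y) = x and L_j(x,y) = y + t_j x for 1 ≤ j ≤ n. For 0 ≤ r ≤ min_{j≥1} |E_j|, set S_0^⋆(r) = {(x,y) : |x| ≤ |E_0|/2} and S_j^⋆(r) = {(x,y) : |y + t_j x| ≤ (|E_j| − r)/2} for j ≥ 1. Then there exists r̄ ∈ (0, min_{1≤j≤n} |E_j|) such that: (a) the (n+1)-tuple with measures (|E_0|, |E_1| − r̄, ..., |E_n| − r̄) is admissible, and (b) S_0^⋆ ⊇ ⋂_{j≥1} S_j^⋆(r̄). -/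
import Mathlib


open MeasureTheory Set

/-- The strip `S_0^⋆ = {(x,y) : |x| ≤ |E₀|/2}`. -/
def strip0 (E0 : Set ℝ) : Set (ℝ × ℝ) :=
  {p | |p.1| ≤ (MeasureTheory.volume E0).toReal / 2}

/-- The strip `S_j^⋆(r) = {(x,y) : |y + t x| ≤ (|E| - r)/2}`. -/
def stripT (t : ℝ) (E : Set ℝ) (r : ℝ) : Set (ℝ × ℝ) :=
  {p | |p.2 + t * p.1| ≤ ((MeasureTheory.volume E).toReal - r) / 2}

lemma key {n : ℕ} (hn : 2 ≤ n) (t : Fin n → ℝ) (ht : Function.Injective t)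
    (c0 : ℝ) (hc0 : 0 < c0) (a : Fin n → ℝ)
    (p0 : ℝ × ℝ) (hp0 : ∀ j, |p0.2 + t j * p0.1| ≤ a j / 2) (hp0x : c0 < |p0.1|)
    (x : Fin n → ℝ) (hx1 : ∀ i, |x i| ≤ c0)
    (hx2 : ∀ i j, j ≠ i → a i - a j < 2 * (t i - t j) * x i) :
    ∃ r : ℝ, 0 < r ∧ (∀ j, r < a j) ∧
      (∃ y : ℝ, ∀ j, |y + t j * c0| ≤ (a j - r) / 2) ∧
      (∀ i, ∃ q : ℝ × ℝ, |q.1| ≤ c0 ∧ (∀ j, j ≠ i → |q.2 + t j * q.1| ≤ (a j - r) / 2) ∧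
        q.2 + t i * q.1 = (a i - r) / 2) ∧
      (∀ p : ℝ × ℝ, (∀ j, |p.2 + t j * p.1| ≤ (a j - r) / 2) → |p.1| ≤ c0) := by
  classical
  have hnt : Nontrivial (Fin n) := Fin.nontrivial_iff_two_le.mpr hn
  set P : Finset (Fin n × Fin n) := Finset.univ.filter (fun q => q.1 ≠ q.2) with hP
  obtain ⟨u, v, huv⟩ := exists_pair_ne (Fin n)
  have hPne : P.Nonempty := ⟨(u, v), by simp [hP, huv]⟩
  set f : Fin n × Fin n → ℝ := fun q => (a q.1 + a q.2) / 2 - c0 * |t q.1 - t q.2| with hf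
  set ρ : ℝ := P.inf' hPne f with hρ
  have hmemP : ∀ j k : Fin n, j ≠ k → (j, k) ∈ P := by
    intro j k h; simp [hP, h]
  have hρle : ∀ j k : Fin n, j ≠ k →
      ρ ≤ (a j + a k) / 2 - c0 * |t j - t k| := by
    intro j k h
    exact Finset.inf'_le f (hmemP j k h)
  have habs : ∀ s : ℝ, s * c0 ≤ |s| * c0 := fun s =>
    mul_le_mul_of_nonneg_right (le_abs_self s) hc0.le
  -- positivity of each pair value, from p0
  have hpair : ∀ j k : Fin n, j ≠ k → c0 * |t j - t k| < (a j + a k) / 2 := by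
    intro j k hjk
    have htjk : t j ≠ t k := fun h => hjk (ht h)
    have h3 : (0:ℝ) < |t j - t k| := abs_pos.mpr (sub_ne_zero.mpr htjk)
    have h1 : |t j - t k| * |p0.1| = |(p0.2 + t j * p0.1) - (p0.2 + t k * p0.1)| := by
      rw [← abs_mul]; ring_nf
    have h2 : |(p0.2 + t j * p0.1) - (p0.2 + t k * p0.1)| ≤ a j / 2 + a k / 2 :=
      (abs_sub _ _).trans (add_le_add (hp0 j) (hp0 k))
    have h4 : c0 * |t j - t k| < |p0.1| * |t j - t k| :=
      mul_lt_mul_of_pos_right hp0x h3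
    nlinarith [h1, h2, h4]
  obtain ⟨qm, hqmP, hqm0⟩ := Finset.exists_mem_eq_inf' hPne f
  have hqmne : qm.1 ≠ qm.2 := (Finset.mem_filter.mp hqmP).2
  have hqm : ρ = (a qm.1 + a qm.2) / 2 - c0 * |t qm.1 - t qm.2| := hqm0
  have hρpos : 0 < ρ := by
    have := hpair qm.1 qm.2 hqmne
    linarith
  have haux : ∀ (i l : Fin n), (t i - t l) * x i ≤ c0 * |t i - t l| := by
    intro i l
    calc (t i - t l) * x i ≤ |(t i - t l) * x i| := le_abs_self _
      _ = |t i - t l| * |x i| := abs_mul _ _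
      _ ≤ |t i - t l| * c0 := mul_le_mul_of_nonneg_left (hx1 i) (abs_nonneg _)
      _ = c0 * |t i - t l| := mul_comm _ _
  have hρlta : ∀ l, ρ < a l := by
    intro l
    obtain ⟨i, hil⟩ := exists_ne l
    have h1 := hx2 i l hil.symm
    have h2 := haux i l
    have h3 := hρle i l hil
    linarith
  refine ⟨ρ, hρpos, hρlta, ?_, ?_, ?_⟩
  · -- boundary point (c0, y)
    have hune : (Finset.univ : Finset (Fin n)).Nonempty := Finset.univ_nonempty
    set y : ℝ := Finset.univ.inf' hune (fun l => (a l - ρ) / 2 - t l * c0) with hy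
    refine ⟨y, fun l => ?_⟩
    have hup : y ≤ (a l - ρ) / 2 - t l * c0 := Finset.inf'_le _ (Finset.mem_univ l)
    obtain ⟨l', _, hyl'⟩ := Finset.exists_mem_eq_inf' hune
      (fun l => (a l - ρ) / 2 - t l * c0)
    have hyl2 : y = (a l' - ρ) / 2 - t l' * c0 := hyl'
    rw [abs_le]
    refine ⟨?_, by linarith⟩
    rw [hyl2]
    rcases eq_or_ne l l' with rfl | hll'
    · have := hρlta l; linarith
    · have h3 := hρle l' l hll'.symm
      have h4 : (t l' - t l) * c0 ≤ c0 * |t l' - t l| := by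
        have := habs (t l' - t l)
        linarith [(mul_comm |t l' - t l| c0)]
      linarith
  · -- point q for each i
    intro i
    refine ⟨(x i, (a i - ρ) / 2 - t i * x i), hx1 i, ?_, by ring⟩
    intro j hj
    have h1 := hx2 i j hj
    have h2 := haux i j
    have h3 := hρle i j hj.symm
    rw [abs_le]
    constructor <;> nlinarith [h1, h2, h3]
  · -- containment
    intro p hp
    have hA := hp qm.1
    have hB := hp qm.2
    set j := qm.1
    set k := qm.2
    have htjk : t j ≠ t k := fun h => hqmne (ht h)
    have h3 : (0:ℝ) < |t j - t k| := abs_pos.mpr (sub_ne_zero.mpr htjk)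
    have h1 : |t j - t k| * |p.1| = |(p.2 + t j * p.1) - (p.2 + t k * p.1)| := by
      rw [← abs_mul]; ring_nf
    have h2 : |(p.2 + t j * p.1) - (p.2 + t k * p.1)| ≤ (a j - ρ) / 2 + (a k - ρ) / 2 :=
      (abs_sub _ _).trans (add_le_add hA hB)
    have h5 : ρ = (a j + a k) / 2 - c0 * |t j - t k| := hqm
    by_contra hcon
    push_neg at hcon
    have h6 : c0 * |t j - t k| < |p.1| * |t j - t k| :=
      mul_lt_mul_of_pos_right hcon h3
    nlinarith [h1, h2, h5, h6]

/-- Deformation lemma: for a strictly admissible tuple there is `r̄ ∈ (0, min |E_j|)` such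
that the truncated tuple is admissible and `S_0^⋆ ⊇ ⋂_{j ≥ 1} S_j^⋆(r̄)`. -/
theorem stmt6 (n : ℕ) (hn : 2 ≤ n) (t : Fin n → ℝ) (ht : Function.Injective t)
    (E0 : Set ℝ) (E : Fin n → Set ℝ)
    (hmeas0 : MeasurableSet E0) (hpos0 : 0 < volume E0) (hfin0 : volume E0 < ⊤)
    (hmeas : ∀ j, MeasurableSet (E j)) (hpos : ∀ j, 0 < volume (E j))
    (hfin : ∀ j, volume (E j) < ⊤)
    -- strict admissibility of (E₀, E₁, …, Eₙ):
    (hstrict0 : ¬ ((⋂ j, stripT (t j) (E j) 0) ⊆ strip0 E0))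
    (hstrict : ∀ i, ¬ ((strip0 E0 ∩ ⋂ j ∈ ({i}ᶜ : Set (Fin n)), stripT (t j) (E j) 0) ⊆
      stripT (t i) (E i) 0)) :
    ∃ r : ℝ, 0 < r ∧ (∀ j, r < (volume (E j)).toReal) ∧
      -- (a) the truncated tuple is admissible:
      (¬ ∃ U : Set (ℝ × ℝ), IsOpen U ∧ (⋂ j, stripT (t j) (E j) r) ⊆ U ∧ U ⊆ strip0 E0) ∧
      (∀ i, ¬ ∃ U : Set (ℝ × ℝ), IsOpen U ∧
        (strip0 E0 ∩ ⋂ j ∈ ({i}ᶜ : Set (Fin n)), stripT (t j) (E j) r) ⊆ U ∧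
        U ⊆ stripT (t i) (E i) r) ∧
      -- (b) `S_0^⋆ ⊇ ⋂_{j ≥ 1} S_j^⋆(r̄)`:
      (⋂ j, stripT (t j) (E j) r) ⊆ strip0 E0 := by
  classical
  have hc0 : 0 < (volume E0).toReal / 2 := by
    have := ENNReal.toReal_pos hpos0.ne' hfin0.ne
    linarith
  -- the witness from hstrict0
  rw [Set.not_subset] at hstrict0
  obtain ⟨p0, hp0mem, hp0not⟩ := hstrict0
  have hp0 : ∀ j, |p0.2 + t j * p0.1| ≤ (volume (E j)).toReal / 2 := by
    intro j
    have h := Set.mem_iInter.mp hp0mem j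
    simp only [stripT, Set.mem_setOf_eq, sub_zero] at h
    exact h
  have hp0x : (volume E0).toReal / 2 < |p0.1| := by
    by_contra h
    exact hp0not (by simpa [strip0, Set.mem_setOf_eq] using not_lt.mp h)
  -- the witnesses from hstrict
  have hwi : ∀ i, ∃ xi : ℝ, |xi| ≤ (volume E0).toReal / 2 ∧
      ∀ j, j ≠ i → (volume (E i)).toReal - (volume (E j)).toReal
        < 2 * (t i - t j) * xi := by
    intro i
    have h := hstrict i
    rw [Set.not_subset] at h
    obtain ⟨p, hpmem, hpnot⟩ := h
    have hpx : |p.1| ≤ (volume E0).toReal / 2 := hpmem.1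
    have hpj : ∀ j, j ≠ i → |p.2 + t j * p.1| ≤ (volume (E j)).toReal / 2 := by
      intro j hj
      have h2 := Set.mem_iInter₂.mp hpmem.2 j (by simpa using hj)
      simp only [stripT, Set.mem_setOf_eq, sub_zero] at h2
      exact h2
    have hpi : (volume (E i)).toReal / 2 < |p.2 + t i * p.1| := by
      by_contra h2
      exact hpnot (by
        simp only [stripT, Set.mem_setOf_eq, sub_zero]
        exact not_lt.mp h2)
    rcases le_or_gt 0 (p.2 + t i * p.1) with hsgn | hsgn
    · refine ⟨p.1, hpx, fun j hj => ?_⟩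
      have h1 : (volume (E i)).toReal / 2 < p.2 + t i * p.1 := by
        rwa [abs_of_nonneg hsgn] at hpi
      have h2 := (abs_le.mp (hpj j hj)).2
      nlinarith [h1, h2]
    · refine ⟨-p.1, by rwa [abs_neg], fun j hj => ?_⟩
      have h1 : (volume (E i)).toReal / 2 < -(p.2 + t i * p.1) := by
        rwa [abs_of_neg hsgn] at hpi
      have h2 := (abs_le.mp (hpj j hj)).1
      nlinarith [h1, h2]
  choose x hx1 hx2 using hwi
  obtain ⟨r, hr1, hr2, ⟨y, hy⟩, hq, hb⟩ := key hn t ht ((volume E0).toReal / 2) hc0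
    (fun j => (volume (E j)).toReal) p0 hp0 hp0x x hx1 hx2
  have hbset : (⋂ j, stripT (t j) (E j) r) ⊆ strip0 E0 := by
    intro p hp
    have : ∀ j, |p.2 + t j * p.1| ≤ ((volume (E j)).toReal - r) / 2 := by
      intro j
      exact Set.mem_iInter.mp hp j
    exact hb p this
  refine ⟨r, hr1, hr2, ?_, ?_, hbset⟩
  · -- no open set between the intersection and strip0
    rintro ⟨U, hUo, hKU, hU0⟩
    set c0 := (volume E0).toReal / 2 with hc0def
    have hpy : ((c0, y) : ℝ × ℝ) ∈ ⋂ j, stripT (t j) (E j) r := by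
      rw [Set.mem_iInter]
      intro j
      exact hy j
    have hpyU : ((c0, y) : ℝ × ℝ) ∈ U := hKU hpy
    obtain ⟨ε, hε, hball⟩ := Metric.isOpen_iff.mp hUo _ hpyU
    have hp'U : ((c0 + ε / 2, y) : ℝ × ℝ) ∈ U := by
      apply hball
      rw [Metric.mem_ball, Prod.dist_eq]
      have h1 : dist (c0 + ε / 2) c0 = ε / 2 := by
        rw [Real.dist_eq]
        rw [show c0 + ε / 2 - c0 = ε / 2 by ring, abs_of_pos (by linarith)]
      have h2 : dist y y = 0 := dist_self y
      rw [h1, h2]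
      exact max_lt (by linarith) hε
    have := hU0 hp'U
    simp only [strip0, Set.mem_setOf_eq] at this
    have h3 : c0 + ε / 2 ≤ c0 := le_trans (le_abs_self _) this
    linarith
  · -- no open set between C_i and stripT i
    intro i
    rintro ⟨U, hUo, hCU, hUi⟩
    obtain ⟨q, hq1, hq2, hq3⟩ := hq i
    have hqmem : q ∈ strip0 E0 ∩ ⋂ j ∈ ({i}ᶜ : Set (Fin n)), stripT (t j) (E j) r := by
      constructor
      · exact hq1
      · rw [Set.mem_iInter₂]
        intro j hj
        exact hq2 j (by simpa using hj)
    have hqU : q ∈ U := hCU hqmem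
    obtain ⟨ε, hε, hball⟩ := Metric.isOpen_iff.mp hUo _ hqU
    have hq'U : ((q.1, q.2 + ε / 2) : ℝ × ℝ) ∈ U := by
      apply hball
      rw [Metric.mem_ball, Prod.dist_eq]
      have h1 : dist q.1 q.1 = 0 := dist_self _
      have h2 : dist (q.2 + ε / 2) q.2 = ε / 2 := by
        rw [Real.dist_eq, show q.2 + ε / 2 - q.2 = ε / 2 by ring,
          abs_of_pos (by linarith)]
      simp only
      rw [h1, h2]
      exact max_lt hε (by linarith)
    have hmem := hUi hq'U
    simp only [stripT, Set.mem_setOf_eq] at hmem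
    have hv : q.2 + ε / 2 + t i * q.1 = ((volume (E i)).toReal - r) / 2 + ε / 2 := by
      have := hq3
      linarith [hq3]
    rw [hv] at hmem
    have h0 : 0 ≤ ((volume (E i)).toReal - r) / 2 := by
      have := hr2 i; linarith
    have := le_trans (le_abs_self _) hmem
    linarith
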